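/- With θ = 2bτ and Φ(τ,y,a,b) = (4πτ)^{-1/2}√(θ/sinh θ)·exp{-(1/(4τ))[(θ cosh θ/sinh θ)y² + 4aτ((cosh θ - 1)/sinh θ)y + 8a²τ²((cosh θ - 1)/(θ sinh θ))]}, the function Φ satisfies ∂Φ/∂τ - ∂²Φ/∂y² + (a + by)²·Φ = 0 for all τ > 0, y ∈ ℝ. -/

import Mathlib

set_option maxHeartbeats 1000000

open Real

noncomputable def Fker (a b τ y : ℝ) : ℝ :=
  Real.sqrt (b / (2 * π)) * (Real.sqrt (Real.sinh (2 * b * τ)))⁻¹ *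
    Real.exp (-(b / 2 * (Real.cosh (2 * b * τ) / Real.sinh (2 * b * τ)) * y ^ 2
      + a * ((Real.cosh (2 * b * τ) - 1) / Real.sinh (2 * b * τ)) * y
      + a ^ 2 / b * ((Real.cosh (2 * b * τ) - 1) / Real.sinh (2 * b * τ))))

/-- generic first `y`-derivative of a Gaussian-type function -/
lemma gen_y (K R C2 C1 C0 z : ℝ) :
    HasDerivAt (fun w : ℝ => K * R * Real.exp (-(C2 * w ^ 2 + C1 * w + C0)))
      (K * R * Real.exp (-(C2 * z ^ 2 + C1 * z + C0)) * (-(C2 * (2 * z) + C1))) z := by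
  have h1 : HasDerivAt (fun w : ℝ => C2 * w ^ 2) (C2 * (2 * z)) z := by
    simpa [mul_comm] using (hasDerivAt_pow 2 z).const_mul C2
  have h2 : HasDerivAt (fun w : ℝ => C1 * w) C1 z := by
    simpa using (hasDerivAt_id z).const_mul C1
  have h3 : HasDerivAt (fun w : ℝ => -(C2 * w ^ 2 + C1 * w + C0))
      (-(C2 * (2 * z) + C1)) z := by
    exact ((h1.add h2).add_const C0).neg
  simpa [mul_assoc] using (h3.exp).const_mul (K * R)

lemma gen_yy (K R C2 C1 C0 y : ℝ) :
    HasDerivAt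
      (fun z : ℝ => K * R * Real.exp (-(C2 * z ^ 2 + C1 * z + C0)) * (-(C2 * (2 * z) + C1)))
      (K * R * Real.exp (-(C2 * y ^ 2 + C1 * y + C0)) *
        ((C2 * (2 * y) + C1) ^ 2 - 2 * C2)) y := by
  have hL : HasDerivAt (fun z : ℝ => -(C2 * (2 * z) + C1)) (-(C2 * 2)) y := by
    have : HasDerivAt (fun z : ℝ => C2 * (2 * z)) (C2 * 2) y := by
      simpa [mul_assoc] using ((hasDerivAt_id y).const_mul 2).const_mul C2
    exact (this.add_const C1).neg
  have := (gen_y K R C2 C1 C0 y).mul hL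
  exact this.congr_deriv (by ring)

theorem phi_heat_equation (a b : ℝ) (hb : 0 < b)
    (Φ : ℝ → ℝ → ℝ)
    (hΦ : ∀ τ y, Φ τ y =
      (1 / Real.sqrt (4 * π * τ)) * Real.sqrt ((2 * b * τ) / Real.sinh (2 * b * τ)) *
        Real.exp (-(1 / (4 * τ)) *
          (((2 * b * τ) * Real.cosh (2 * b * τ) / Real.sinh (2 * b * τ)) * y ^ 2
            + 4 * a * τ * ((Real.cosh (2 * b * τ) - 1) / Real.sinh (2 * b * τ)) * y
            + 8 * a ^ 2 * τ ^ 2 *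
              ((Real.cosh (2 * b * τ) - 1) / ((2 * b * τ) * Real.sinh (2 * b * τ)))))) :
    ∀ τ : ℝ, 0 < τ → ∀ y : ℝ,
      deriv (fun s => Φ s y) τ - deriv (fun z => deriv (fun w => Φ τ w) z) y
        + (a + b * y) ^ 2 * Φ τ y = 0 := by
  have hπ : (0:ℝ) < π := Real.pi_pos
  -- Φ agrees with Fker on positive times
  have hPhiF : ∀ σ : ℝ, 0 < σ → ∀ w : ℝ, Φ σ w = Fker a b σ w := by
    intro σ hσ w
    have hθ : 0 < 2 * b * σ := by positivity
    have hs : 0 < Real.sinh (2 * b * σ) := Real.sinh_pos_iff.mpr hθ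
    rw [hΦ, Fker]
    congr 1
    · -- prefactor
      rw [one_div, ← Real.sqrt_inv, ← Real.sqrt_mul (by positivity),
          ← Real.sqrt_inv (Real.sinh (2 * b * σ)),
          ← Real.sqrt_mul (by positivity : (0:ℝ) ≤ b / (2 * π))]
      congr 1
      field_simp
      ring
    · -- exponent
      congr 1
      field_simp
      ring
  intro τ hτ y
  have hθp : 0 < 2 * b * τ := by positivity
  have hs : 0 < Real.sinh (2 * b * τ) := Real.sinh_pos_iff.mpr hθp
  have hsne : Real.sinh (2 * b * τ) ≠ 0 := ne_of_gt hs
  have hrpos : 0 < Real.sqrt (Real.sinh (2 * b * τ)) := Real.sqrt_pos.mpr hs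
  have hrne : Real.sqrt (Real.sinh (2 * b * τ)) ≠ 0 := ne_of_gt hrpos
  have hr2 : Real.sqrt (Real.sinh (2 * b * τ)) ^ 2 = Real.sinh (2 * b * τ) :=
    Real.sq_sqrt hs.le
  have hc2 : Real.cosh (2 * b * τ) ^ 2 = Real.sinh (2 * b * τ) ^ 2 + 1 :=
    Real.cosh_sq (2 * b * τ)
  have hbne : b ≠ 0 := ne_of_gt hb
  -- y-derivatives of Fker
  have hFy : ∀ z : ℝ, HasDerivAt (fun w => Fker a b τ w)
      (Fker a b τ z *
        (-(b / 2 * (Real.cosh (2 * b * τ) / Real.sinh (2 * b * τ)) * (2 * z)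
          + a * ((Real.cosh (2 * b * τ) - 1) / Real.sinh (2 * b * τ))))) z := by
    intro z
    exact gen_y _ _ _ _ _ z
  have hderiv1 : deriv (fun w => Fker a b τ w)
      = fun z => Fker a b τ z *
        (-(b / 2 * (Real.cosh (2 * b * τ) / Real.sinh (2 * b * τ)) * (2 * z)
          + a * ((Real.cosh (2 * b * τ) - 1) / Real.sinh (2 * b * τ)))) :=
    funext fun z => (hFy z).deriv
  have hFyy : HasDerivAt
      (fun z => Fker a b τ z *
        (-(b / 2 * (Real.cosh (2 * b * τ) / Real.sinh (2 * b * τ)) * (2 * z)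
          + a * ((Real.cosh (2 * b * τ) - 1) / Real.sinh (2 * b * τ)))))
      (Fker a b τ y *
        ((b / 2 * (Real.cosh (2 * b * τ) / Real.sinh (2 * b * τ)) * (2 * y)
          + a * ((Real.cosh (2 * b * τ) - 1) / Real.sinh (2 * b * τ))) ^ 2
          - 2 * (b / 2 * (Real.cosh (2 * b * τ) / Real.sinh (2 * b * τ))))) y := by
    exact gen_yy _ _ _ _ _ y
  -- time derivative of Fker
  have hFt : HasDerivAt (fun σ => Fker a b σ y)
      (Fker a b τ y *
        (-(b * Real.cosh (2 * b * τ) / Real.sinh (2 * b * τ)) +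
          (b ^ 2 * y ^ 2 - 2 * a * b * (Real.cosh (2 * b * τ) - 1) * y
            - 2 * a ^ 2 * (Real.cosh (2 * b * τ) - 1)) / Real.sinh (2 * b * τ) ^ 2)) τ := by
    have hθd : HasDerivAt (fun σ : ℝ => 2 * b * σ) (2 * b * 1) τ := by
      simpa using (hasDerivAt_id τ).const_mul (2 * b)
    have hu : HasDerivAt (fun σ : ℝ => Real.sinh (2 * b * σ))
        (Real.cosh (2 * b * τ) * (2 * b * 1)) τ := (Real.hasDerivAt_sinh _).comp τ hθd
    have hv : HasDerivAt (fun σ : ℝ => Real.cosh (2 * b * σ))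
        (Real.sinh (2 * b * τ) * (2 * b * 1)) τ := (Real.hasDerivAt_cosh _).comp τ hθd
    have hsqrt : HasDerivAt (fun σ : ℝ => Real.sqrt (Real.sinh (2 * b * σ)))
        (1 / (2 * Real.sqrt (Real.sinh (2 * b * τ))) * (Real.cosh (2 * b * τ) * (2 * b * 1))) τ :=
      (Real.hasDerivAt_sqrt hsne).comp τ hu
    have hinv : HasDerivAt (fun σ : ℝ => (Real.sqrt (Real.sinh (2 * b * σ)))⁻¹)
        (-(1 / (2 * Real.sqrt (Real.sinh (2 * b * τ))) * (Real.cosh (2 * b * τ) * (2 * b * 1)))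
          / Real.sqrt (Real.sinh (2 * b * τ)) ^ 2) τ := hsqrt.inv hrne
    have hq1 : HasDerivAt (fun σ : ℝ => Real.cosh (2 * b * σ) / Real.sinh (2 * b * σ))
        ((Real.sinh (2 * b * τ) * (2 * b * 1) * Real.sinh (2 * b * τ)
          - Real.cosh (2 * b * τ) * (Real.cosh (2 * b * τ) * (2 * b * 1)))
          / Real.sinh (2 * b * τ) ^ 2) τ := hv.div hu hsne
    have hq2 : HasDerivAt (fun σ : ℝ => (Real.cosh (2 * b * σ) - 1) / Real.sinh (2 * b * σ))
        ((Real.sinh (2 * b * τ) * (2 * b * 1) * Real.sinh (2 * b * τ)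
          - (Real.cosh (2 * b * τ) - 1) * (Real.cosh (2 * b * τ) * (2 * b * 1)))
          / Real.sinh (2 * b * τ) ^ 2) τ := (hv.sub_const 1).div hu hsne
    have term1 := (hq1.const_mul (b / 2)).mul_const (y ^ 2)
    have term2 := (hq2.const_mul a).mul_const y
    have term3 := hq2.const_mul (a ^ 2 / b)
    have hexp := (((term1.add term2).add term3).neg).exp
    have hfull := (hinv.const_mul (Real.sqrt (b / (2 * π)))).mul hexp
    have hfun : HasDerivAt (fun σ => Fker a b σ y) _ τ := hfull
    convert hfun using 1
    simp only [Pi.add_apply, Pi.neg_apply]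
    rw [show Fker a b τ y = Real.sqrt (b / (2 * π)) * (Real.sqrt (Real.sinh (2 * b * τ)))⁻¹ *
      Real.exp (-(b / 2 * (Real.cosh (2 * b * τ) / Real.sinh (2 * b * τ)) * y ^ 2
        + a * ((Real.cosh (2 * b * τ) - 1) / Real.sinh (2 * b * τ)) * y
        + a ^ 2 / b * ((Real.cosh (2 * b * τ) - 1) / Real.sinh (2 * b * τ)))) from rfl]
    set c := Real.cosh (2 * b * τ) with hcdef
    set s := Real.sinh (2 * b * τ) with hsdef
    set r := Real.sqrt s with hrdef
    set K := Real.sqrt (b / (2 * π)) with hKdef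
    set E := Real.exp (-(b / 2 * (c / s) * y ^ 2 + a * ((c - 1) / s) * y
      + a ^ 2 / b * ((c - 1) / s))) with hEdef
    field_simp
    linear_combination (K * E * (-(b * c * s)) - K * E * (b ^ 2 * y ^ 2 + 2 * a * b * y + 2 * a ^ 2)
        * (c ^ 2 - s ^ 2 - 1)) * hr2
      + (-(s * K * E * (b ^ 2 * y ^ 2 + 2 * a * b * y + 2 * a ^ 2))) * hc2
  -- assemble
  have e1 : deriv (fun σ => Φ σ y) τ = Fker a b τ y *
      (-(b * Real.cosh (2 * b * τ) / Real.sinh (2 * b * τ)) +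
        (b ^ 2 * y ^ 2 - 2 * a * b * (Real.cosh (2 * b * τ) - 1) * y
          - 2 * a ^ 2 * (Real.cosh (2 * b * τ) - 1)) / Real.sinh (2 * b * τ) ^ 2) := by
    have hev : (fun σ => Φ σ y) =ᶠ[nhds τ] (fun σ => Fker a b σ y) := by
      filter_upwards [Ioi_mem_nhds hτ] with σ hσ
      exact hPhiF σ hσ y
    rw [hev.deriv_eq]
    exact hFt.deriv
  have e2 : (fun w => Φ τ w) = fun w => Fker a b τ w := funext fun w => hPhiF τ hτ w
  rw [e1, e2, hderiv1, hPhiF τ hτ y, hFyy.deriv]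
  have key : (-(b * Real.cosh (2 * b * τ) / Real.sinh (2 * b * τ)) +
        (b ^ 2 * y ^ 2 - 2 * a * b * (Real.cosh (2 * b * τ) - 1) * y
          - 2 * a ^ 2 * (Real.cosh (2 * b * τ) - 1)) / Real.sinh (2 * b * τ) ^ 2)
      - ((b / 2 * (Real.cosh (2 * b * τ) / Real.sinh (2 * b * τ)) * (2 * y)
          + a * ((Real.cosh (2 * b * τ) - 1) / Real.sinh (2 * b * τ))) ^ 2
          - 2 * (b / 2 * (Real.cosh (2 * b * τ) / Real.sinh (2 * b * τ))))
      + (a + b * y) ^ 2 = 0 := by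
    set c := Real.cosh (2 * b * τ) with hcdef
    set s := Real.sinh (2 * b * τ) with hsdef
    field_simp
    linear_combination (-(a + b * y) ^ 2) * hc2
  linear_combination Fker a b τ y * key
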